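/- ζ(3) = (1/7) · ∫_0^π x(π − x)/sin(x) dx. -/

import Mathlib

open Real MeasureTheory intervalIntegral

lemma sin_odd_mul (k : ℕ) (x : ℝ) :
    Real.sin ((2 * k + 1) * x) =
      Real.sin x * (1 + 2 * ∑ j ∈ Finset.range k, Real.cos (2 * (j + 1) * x)) := by
  induction k with
  | zero => simp
  | succ k ih =>
    have h := Real.sin_sub_sin ((2 * (k+1) + 1) * x) ((2 * k + 1) * x)
    have e1 : ((2 * ((k:ℝ)+1) + 1) * x - (2 * k + 1) * x) / 2 = x := by ring
    have e2 : ((2 * ((k:ℝ)+1) + 1) * x + (2 * k + 1) * x) / 2 = 2 * ((k:ℝ)+1) * x := by ring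
    push_cast at h ⊢
    rw [e1, e2] at h
    rw [Finset.sum_range_succ]
    nlinarith [h, ih]

lemma integral_cos_cx (c : ℝ) (hc : c ≠ 0) :
    ∫ x in (0:ℝ)..π, Real.cos (c * x) = Real.sin (c * π) / c := by
  have := intervalIntegral.integral_comp_mul_left (fun y => Real.cos y) (a := 0) (b := π) (c := c)
  simp [integral_cos] at this
  rw [this hc]
  field_simp

lemma integral_dirichlet (k : ℕ) :
    ∫ x in (0:ℝ)..π, Real.sin ((2 * k + 1) * x) / Real.sin x = π := by
  have hcong : ∀ᵐ x : ℝ, x ∈ Set.uIoc (0:ℝ) π →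
      Real.sin ((2 * k + 1) * x) / Real.sin x
        = 1 + 2 * ∑ j ∈ Finset.range k, Real.cos (2 * (j + 1) * x) := by
    have hne : ∀ᵐ x : ℝ, x ≠ π := by
      rw [ae_iff]; simpa using measure_singleton (π : ℝ)
    filter_upwards [hne] with x hx hmem
    rw [Set.uIoc_of_le Real.pi_pos.le] at hmem
    have hxlt : x < π := lt_of_le_of_ne hmem.2 hx
    have hs : Real.sin x ≠ 0 := (Real.sin_pos_of_pos_of_lt_pi hmem.1 hxlt).ne'
    rw [sin_odd_mul, mul_comm, mul_div_assoc, div_self hs, mul_one]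
  rw [intervalIntegral.integral_congr_ae hcong]
  have hint : ∀ j ∈ Finset.range k, IntervalIntegrable
      (fun x => Real.cos (2 * ((j:ℝ) + 1) * x)) volume 0 π := by
    intro j _
    exact (Real.continuous_cos.comp (by continuity)).intervalIntegrable 0 π
  rw [intervalIntegral.integral_add (intervalIntegrable_const) ?_, intervalIntegral.integral_const]
  · rw [intervalIntegral.integral_const_mul, intervalIntegral.integral_finset_sum hint]
    have : ∀ j ∈ Finset.range k, ∫ x in (0:ℝ)..π, Real.cos (2 * ((j:ℝ) + 1) * x) = 0 := by
      intro j _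
      have hc : (2 * ((j:ℝ) + 1)) ≠ 0 := by positivity
      rw [integral_cos_cx _ hc]
      have : Real.sin (2 * ((j:ℝ) + 1) * π) = 0 := by
        have : 2 * ((j:ℝ) + 1) * π = (2 * (j + 1) : ℕ) * π := by push_cast; ring
        rw [this, Real.sin_nat_mul_pi]
      rw [this, zero_div]
    rw [Finset.sum_congr rfl this]
    simp
  · exact (Continuous.intervalIntegrable (by continuity) 0 π)

lemma bernoulli_three_eval (t : ℝ) :
    (Polynomial.map (algebraMap ℚ ℝ) (Polynomial.bernoulli 3)).eval t
      = t^3 - 3/2 * t^2 + 1/2 * t := by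
  simp_rw [Polynomial.bernoulli, Finset.sum_range_succ, Polynomial.map_add,
    Polynomial.map_monomial, Polynomial.eval_add, Polynomial.eval_monomial]
  rw [Finset.sum_range_zero]
  rw [bernoulli_one, bernoulli_eq_bernoulli'_of_ne_one zero_ne_one, bernoulli'_zero,
    bernoulli_eq_bernoulli'_of_ne_one (by decide : 2 ≠ 1), bernoulli'_two,
    bernoulli_eq_bernoulli'_of_ne_one (by decide : 3 ≠ 1), bernoulli'_three]
  norm_num
  ring

lemma hasSum_S {y : ℝ} (h0 : 0 ≤ y) (h2 : y ≤ 2 * π) :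
    HasSum (fun n : ℕ => Real.sin (n * y) / (n : ℝ) ^ 3)
      (y^3/12 - π*y^2/4 + π^2*y/6) := by
  have hπ : (0:ℝ) < π := Real.pi_pos
  have hx : y / (2 * π) ∈ Set.Icc (0:ℝ) 1 := by
    constructor
    · positivity
    · rw [div_le_one (by positivity)]; exact h2
  have H := hasSum_one_div_nat_pow_mul_sin (k := 1) one_ne_zero hx
  have e : ∀ n : ℕ, 1 / (n : ℝ) ^ (2 * 1 + 1) * Real.sin (2 * π * n * (y / (2 * π)))
      = Real.sin (n * y) / (n : ℝ) ^ 3 := by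
    intro n
    have : 2 * π * n * (y / (2 * π)) = n * y := by field_simp
    rw [this]; norm_num; ring
  rw [funext e] at H
  convert H using 1
  rw [bernoulli_three_eval]
  norm_num [Nat.factorial]
  field_simp
  ring

lemma hasSum_odd_series {x : ℝ} (h0 : 0 ≤ x) (hπ : x ≤ π) :
    HasSum (fun k : ℕ => Real.sin ((2 * k + 1) * x) / (2 * (k:ℝ) + 1) ^ 3)
      (π * x * (π - x) / 8) := by
  have hpi : (0:ℝ) < π := Real.pi_pos
  set f : ℕ → ℝ := fun n => Real.sin (n * x) / (n : ℝ) ^ 3 with hf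
  have h1 : HasSum f (x^3/12 - π*x^2/4 + π^2*x/6) :=
    hasSum_S h0 (by linarith)
  have h2x : HasSum (fun m : ℕ => f (2 * m))
      (((2*x)^3/12 - π*(2*x)^2/4 + π^2*(2*x)/6)/8) := by
    have H := (hasSum_S (y := 2*x) (by linarith) (by linarith)).div_const 8
    have hfe : (fun m : ℕ => f (2 * m))
        = fun m : ℕ => Real.sin (m * (2*x)) / (m : ℝ) ^ 3 / 8 := by
      funext m
      rcases Nat.eq_zero_or_pos m with rfl | hm
      · simp [hf]
      · have hmne : ((m:ℝ)) ≠ 0 := Nat.cast_ne_zero.mpr hm.ne'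
        rw [hf]
        push_cast
        have e1 : (2:ℝ) * m * x = m * (2 * x) := by ring
        rw [e1, mul_pow]
        norm_num
        ring
    rw [hfe]
    exact H
  have hsumf : Summable f := h1.summable
  have hsodd : Summable (fun k : ℕ => f (2 * k + 1)) :=
    hsumf.comp_injective (fun a b h => by omega)
  have hodd := hsodd.hasSum
  have htot := h2x.even_add_odd hodd
  have hval : ∑' k, f (2 * k + 1) = π * x * (π - x) / 8 := by
    have hu := h1.unique htot
    nlinarith [hu]
  rw [hval] at hodd
  have hfe2 : (fun k : ℕ => Real.sin ((2 * k + 1) * x) / (2 * (k:ℝ) + 1) ^ 3)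
      = fun k : ℕ => f (2 * k + 1) := by
    funext k
    rw [hf]
    push_cast
    ring_nf
  rw [hfe2]
  exact hodd

lemma integral_eval :
    ∫ x in (0:ℝ)..π, x * (π - x) / Real.sin x
      = ∑' k : ℕ, 8 / (2 * (k:ℝ) + 1) ^ 3 := by
  have hpi : (0:ℝ) < π := Real.pi_pos
  set g : ℕ → ℝ → ℝ := fun k x =>
    8 / π / (2 * (k:ℝ) + 1) ^ 3 * (Real.sin ((2 * k + 1) * x) / Real.sin x) with hg
  -- pointwise sum on Ioc
  have hpt : ∀ x ∈ Set.Ioc (0:ℝ) π,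
      HasSum (fun k => g k x) (x * (π - x) / Real.sin x) := by
    intro x hx
    have hπ' : π ≠ 0 := hpi.ne'
    rcases eq_or_lt_of_le hx.2 with heq | hlt
    · have : ∀ k : ℕ, g k x = 0 := by
        intro k; rw [hg, heq]; simp [Real.sin_pi]
      rw [funext this, heq]
      simpa [Real.sin_pi] using hasSum_zero
    · have hs : Real.sin x ≠ 0 := (Real.sin_pos_of_pos_of_lt_pi hx.1 hlt).ne'
      have H := (hasSum_odd_series hx.1.le hlt.le).mul_left (8 / (π * Real.sin x))
      have he : (fun k : ℕ => 8 / (π * Real.sin x) *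
          (Real.sin ((2 * k + 1) * x) / (2 * (k:ℝ) + 1) ^ 3)) = fun k => g k x := by
        funext k
        rw [hg]
        have h1 : (2 * (k:ℝ) + 1) ^ 3 ≠ 0 := by positivity
        ring
      rw [he] at H
      have hv : 8 / (π * Real.sin x) * (π * x * (π - x) / 8)
          = x * (π - x) / Real.sin x := by
        field_simp [hs, hπ']
      rwa [hv] at H
  -- measurability
  have hmeas : ∀ k : ℕ, AEStronglyMeasurable (g k) (volume.restrict (Set.Ioc 0 π)) := by
    intro k
    apply Measurable.aestronglyMeasurable
    exact (measurable_const.mul ((Real.measurable_sin.comp (by fun_prop)).div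
      Real.measurable_sin))
  -- bound
  have hbd : ∀ k : ℕ, ∀ x ∈ Set.Ioc (0:ℝ) π,
      ‖g k x‖ ≤ 8 / π / (2 * (k:ℝ) + 1) ^ 2 := by
    intro k x hx
    have hq : |Real.sin ((2 * k + 1) * x) / Real.sin x| ≤ 2 * (k:ℝ) + 1 := by
      rcases eq_or_lt_of_le hx.2 with heq | hlt
      · have hz : Real.sin ((2 * (k:ℝ) + 1) * x) = 0 := by
          rw [heq]
          have e : (2 * (k:ℝ) + 1) * π = ((2 * k + 1 : ℕ) : ℝ) * π := by push_cast; ring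
          rw [e, Real.sin_nat_mul_pi]
        rw [hz, zero_div, abs_zero]; positivity
      · have hs : Real.sin x ≠ 0 := (Real.sin_pos_of_pos_of_lt_pi hx.1 hlt).ne'
        rw [sin_odd_mul, mul_comm, mul_div_assoc, div_self hs, mul_one]
        calc |1 + 2 * ∑ j ∈ Finset.range k, Real.cos (2 * ((j:ℝ) + 1) * x)|
            ≤ |(1:ℝ)| + |2 * ∑ j ∈ Finset.range k, Real.cos (2 * ((j:ℝ) + 1) * x)| :=
              abs_add_le _ _
          _ ≤ 1 + 2 * k := by
              rw [abs_one, abs_mul, abs_two]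
              have : |∑ j ∈ Finset.range k, Real.cos (2 * ((j:ℝ) + 1) * x)| ≤ k := by
                calc |∑ j ∈ Finset.range k, Real.cos (2 * ((j:ℝ) + 1) * x)|
                    ≤ ∑ j ∈ Finset.range k, |Real.cos (2 * ((j:ℝ) + 1) * x)| :=
                      Finset.abs_sum_le_sum_abs _ _
                  _ ≤ ∑ _j ∈ Finset.range k, (1:ℝ) :=
                      Finset.sum_le_sum fun j _ => Real.abs_cos_le_one _
                  _ = k := by simp
              linarith
          _ ≤ 2 * (k:ℝ) + 1 := by linarith
    have h3 : (0:ℝ) < (2 * (k:ℝ) + 1) ^ 3 := by positivity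
    have hc : (0:ℝ) ≤ 8 / π / (2 * (k:ℝ) + 1) ^ 3 := by positivity
    rw [hg]
    simp only [norm_mul, Real.norm_eq_abs]
    rw [abs_of_nonneg hc]
    calc 8 / π / (2 * (k:ℝ) + 1) ^ 3 * |Real.sin ((2 * ↑k + 1) * x) / Real.sin x|
        ≤ 8 / π / (2 * (k:ℝ) + 1) ^ 3 * (2 * (k:ℝ) + 1) := by
          exact mul_le_mul_of_nonneg_left hq hc
      _ = 8 / π / (2 * (k:ℝ) + 1) ^ 2 := by
          field_simp
  -- summability of the bound
  have hbsum : Summable (fun k : ℕ => 8 / π / (2 * (k:ℝ) + 1) ^ 2) := by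
    have h1 : Summable (fun n : ℕ => 1 / ((n : ℝ) + 1) ^ 2) := by
      have := (Real.summable_one_div_nat_pow (p := 2)).mpr one_lt_two
      have h2 := (summable_nat_add_iff 1).mpr this
      refine h2.congr fun n => ?_
      push_cast
      ring
    refine Summable.of_nonneg_of_le (fun k => by positivity) (fun k => ?_)
      (h1.mul_left (8 / π))
    rw [mul_one_div]
    gcongr
    nlinarith [Nat.cast_nonneg (α := ℝ) k]
  -- finiteness of the lintegral sum
  have hfin : (∑' k : ℕ, ∫⁻ x, ‖g k x‖₊ ∂(volume.restrict (Set.Ioc 0 π))) ≠ ⊤ := by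
    have hle : ∀ k : ℕ, (∫⁻ x, ‖g k x‖₊ ∂(volume.restrict (Set.Ioc 0 π)))
        ≤ ENNReal.ofReal (8 / π / (2 * (k:ℝ) + 1) ^ 2) * ENNReal.ofReal π := by
      intro k
      calc (∫⁻ x, ‖g k x‖₊ ∂(volume.restrict (Set.Ioc 0 π)))
          ≤ ∫⁻ _x in Set.Ioc (0:ℝ) π, ENNReal.ofReal (8 / π / (2 * (k:ℝ) + 1) ^ 2) := by
            refine setLIntegral_mono' measurableSet_Ioc (fun x hx => ?_)
            rw [← enorm_eq_nnnorm, ← ofReal_norm]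
            exact ENNReal.ofReal_le_ofReal (hbd k x hx)
        _ = ENNReal.ofReal (8 / π / (2 * (k:ℝ) + 1) ^ 2) * ENNReal.ofReal π := by
            rw [setLIntegral_const, Real.volume_Ioc, sub_zero]
    have hne : (∑' k : ℕ, ENNReal.ofReal (8 / π / (2 * (k:ℝ) + 1) ^ 2)) * ENNReal.ofReal π
        ≠ ⊤ := by
      rw [← ENNReal.ofReal_tsum_of_nonneg (fun k => by positivity) hbsum]
      exact ENNReal.mul_ne_top ENNReal.ofReal_ne_top ENNReal.ofReal_ne_top
    exact ne_top_of_le_ne_top hne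
      (le_trans (ENNReal.tsum_le_tsum hle) (le_of_eq ENNReal.tsum_mul_right))
  -- interchange
  have hswap : ∫ x in Set.Ioc (0:ℝ) π, (∑' k, g k x)
      = ∑' k, ∫ x in Set.Ioc (0:ℝ) π, g k x :=
    MeasureTheory.integral_tsum hmeas hfin
  have hFg : ∫ x in Set.Ioc (0:ℝ) π, x * (π - x) / Real.sin x
      = ∫ x in Set.Ioc (0:ℝ) π, (∑' k, g k x) := by
    refine setIntegral_congr_fun measurableSet_Ioc (fun x hx => ?_)
    exact ((hpt x hx).tsum_eq).symm
  have hterm : ∀ k : ℕ, ∫ x in Set.Ioc (0:ℝ) π, g k x = 8 / (2 * (k:ℝ) + 1) ^ 3 := by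
    intro k
    rw [hg]
    simp only
    rw [MeasureTheory.integral_const_mul]
    have : ∫ x in Set.Ioc (0:ℝ) π, Real.sin ((2 * k + 1) * x) / Real.sin x = π := by
      rw [← intervalIntegral.integral_of_le hpi.le]
      exact integral_dirichlet k
    rw [this]
    field_simp
  rw [intervalIntegral.integral_of_le hpi.le, hFg, hswap]
  exact tsum_congr hterm

theorem stmt_3 :
    riemannZeta 3 =
      (1 / 7 : ℂ) * ↑(∫ x in (0 : ℝ)..Real.pi, x * (Real.pi - x) / Real.sin x) := by
  have h3 : Summable (fun n : ℕ => 1 / (n:ℝ)^3) :=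
    Real.summable_one_div_nat_pow.mpr (by norm_num)
  set f : ℕ → ℝ := fun n => 1 / (n:ℝ)^3 with hf
  have heven : Summable (fun m : ℕ => f (2 * m)) :=
    h3.comp_injective (fun a b h => by omega)
  have hodd : Summable (fun m : ℕ => f (2 * m + 1)) :=
    h3.comp_injective (fun a b h => by omega)
  have hsplit := tsum_even_add_odd heven hodd
  have hevenval : ∑' m : ℕ, f (2 * m) = 1/8 * ∑' n, f n := by
    rw [← tsum_mul_left]
    congr 1
    funext m
    rcases Nat.eq_zero_or_pos m with rfl | hm
    · simp [hf]
    · have : ((m:ℝ)) ≠ 0 := Nat.cast_ne_zero.mpr hm.ne'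
      rw [hf]
      push_cast
      rw [mul_pow]
      norm_num
      ring
  have hoddval : ∑' m : ℕ, f (2 * m + 1) = 7/8 * ∑' n, f n := by
    rw [hevenval] at hsplit
    linarith
  have hI : ∫ x in (0:ℝ)..π, x * (π - x) / Real.sin x = 7 * ∑' n, f n := by
    rw [integral_eval]
    have he : (fun k : ℕ => 8 / (2 * (k:ℝ) + 1) ^ 3) = fun k : ℕ => 8 * f (2 * k + 1) := by
      funext k
      rw [hf]
      push_cast
      ring
    rw [he, tsum_mul_left, hoddval]
    ring
  have hzeta : riemannZeta 3 = ((∑' n, f n : ℝ) : ℂ) := by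
    have h33 : (3 : ℂ) = ((3 : ℕ) : ℂ) := by norm_num
    rw [h33, zeta_nat_eq_tsum_of_gt_one (by norm_num : 1 < 3), hf]
    rw [Complex.ofReal_tsum]
    congr 1
    funext n
    push_cast
    ring
  rw [hzeta, hI]
  push_cast
  ring
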